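/- For any 0 < α, μ < 1 and m, k ∈ ℕ, let S₁, …, S_k be independent random subsets of an m-element universe U, where each element of U is included in each S_i independently with probability α. Then with probability at least 1 − 2^{(log₂ k)·⌈8·ln(2/μ)/α⌉ − μ²m/16}, every subcollection of {S₁,…,S_k} of size ⌈8·ln(2/μ)/α⌉ is (α/2, μ)-uniform. -/

import Mathlib

open Finset

/-- `IsUniformOn S I γ μ`: the subcollection of `S` indexed by `I` is `(γ, μ)`-uniform. -/
def IsUniformOn {U ι : Type*} [Fintype U] (S : ι → Finset U) (I : Finset ι) (γ μ : ℝ) :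
    Prop :=
  (1 - μ) * (Fintype.card U : ℝ) ≤
    ({u : U | γ * (I.card : ℝ) ≤ ({i : ι | i ∈ I ∧ u ∈ S i}.ncard : ℝ)}.ncard : ℝ)

/-- The probability of the event `E` when `k` subsets of the finite universe `U` are drawn
independently, each element being included in each subset independently with probability
`α`. An outcome `ω : Fin k → U → Bool` records, for each subset index `i` and element `u`,
whether `u` is included in the `i`-th subset. -/
noncomputable def prSets {U : Type*} [Fintype U] [DecidableEq U] (k : ℕ) (α : ℝ)
    (E : Set (Fin k → U → Bool)) : ℝ :=
  ∑ ω : Fin k → U → Bool,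
    E.indicator (fun ω => ∏ i : Fin k, ∏ u : U, cond (ω i u) α (1 - α)) ω

/-- The `i`-th random subset determined by the outcome `ω`. -/
def subsetOf {U : Type*} [Fintype U] {k : ℕ} (ω : Fin k → U → Bool) (i : Fin k) :
    Finset U :=
  Finset.univ.filter fun u => ω i u

namespace Stmt16Aux

lemma sum_union_le {β : Type*} [DecidableEq β] (A B : Finset β) (f : β → ℝ)
    (hf : ∀ b, 0 ≤ f b) : ∑ b ∈ A ∪ B, f b ≤ ∑ b ∈ A, f b + ∑ b ∈ B, f b := by
  have h := Finset.sum_union_inter (s₁ := A) (s₂ := B) (f := f)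
  have h2 : 0 ≤ ∑ b ∈ A ∩ B, f b := Finset.sum_nonneg fun b _ => hf b
  linarith

lemma sum_biUnion_le {α β : Type*} [DecidableEq β] (s : Finset α) (t : α → Finset β)
    (f : β → ℝ) (hf : ∀ b, 0 ≤ f b) :
    ∑ b ∈ s.biUnion t, f b ≤ ∑ a ∈ s, ∑ b ∈ t a, f b := by
  classical
  induction s using Finset.induction_on with
  | empty => simp
  | insert a s h ih =>
    rw [Finset.biUnion_insert, Finset.sum_insert h]
    exact (sum_union_le _ _ f hf).trans (by linarith)

variable {ι : Type*} [Fintype ι] [DecidableEq ι] {κ : ι → Type*} [∀ i, Fintype (κ i)]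

lemma sum_prod_eq_one (w : ∀ i, κ i → ℝ) (h1 : ∀ i, ∑ x, w i x = 1) :
    ∑ ω : ∀ i, κ i, ∏ i, w i (ω i) = 1 := by
  rw [← Fintype.prod_sum w]
  simp [h1]

/-- Chernoff-style master bound over a finite product space. -/
lemma master (w g : ∀ i, κ i → ℝ) (h0 : ∀ i x, 0 ≤ w i x) (hg : ∀ i x, 0 ≤ g i x)
    (E : Finset (∀ i, κ i)) (hE : ∀ ω ∈ E, 1 ≤ ∏ i, g i (ω i)) :
    ∑ ω ∈ E, ∏ i, w i (ω i) ≤ ∏ i, ∑ x, g i x * w i x := by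
  have key : ∑ ω : ∀ i, κ i, (∏ i, g i (ω i)) * ∏ i, w i (ω i)
      = ∏ i, ∑ x, g i x * w i x := by
    rw [Fintype.prod_sum (fun i x => g i x * w i x)]
    exact Finset.sum_congr rfl fun ω _ => (Finset.prod_mul_distrib).symm
  calc ∑ ω ∈ E, ∏ i, w i (ω i)
      ≤ ∑ ω ∈ E, (∏ i, g i (ω i)) * ∏ i, w i (ω i) :=
        Finset.sum_le_sum fun ω hω =>
          le_mul_of_one_le_left (Finset.prod_nonneg fun i _ => h0 i (ω i)) (hE ω hω)
    _ ≤ ∑ ω : ∀ i, κ i, (∏ i, g i (ω i)) * ∏ i, w i (ω i) :=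
        Finset.sum_le_sum_of_subset_of_nonneg (Finset.subset_univ E)
          (fun ω _ _ => mul_nonneg (Finset.prod_nonneg fun i _ => hg i (ω i))
            (Finset.prod_nonneg fun i _ => h0 i (ω i)))
    _ = _ := key

lemma sum_bool_cond (α : ℝ) : ∑ b : Bool, cond b α (1 - α) = 1 := by
  simp [Fintype.sum_bool]

lemma cond_nonneg {α : ℝ} (h0 : 0 < α) (h1 : α < 1) (b : Bool) : 0 ≤ cond b α (1 - α) := by
  cases b <;> simp <;> linarith

lemma sum_col_eq_one {k : ℕ} {α : ℝ} : (0:ℝ) < α → α < 1 →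
    ∑ φ : Fin k → Bool, ∏ i, cond (φ i) α (1 - α) = 1 := fun _ _ =>
  sum_prod_eq_one (fun _ b => cond b α (1 - α)) (fun _ => sum_bool_cond α)

lemma exp_neg_one_lt : Real.exp (-1) < 3 / 8 := by
  rw [Real.exp_neg]
  have h := Real.exp_one_gt_d9
  rw [inv_lt_comm₀ (by positivity) (by norm_num)]
  linarith

/-- Column-space Chernoff bound: the probability that fewer than `α/2·|I|` of the
coordinates in `I` are `true` is at most `μ/2`. -/
lemma colBound {k : ℕ} {α μ : ℝ} (hα0 : 0 < α) (hα1 : α < 1) (hμ0 : 0 < μ) (hμ1 : μ < 1)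
    (I : Finset (Fin k)) (hIt : 8 * Real.log (2 / μ) ≤ α * I.card)
    (Q : Finset (Fin k → Bool))
    (hQ : ∀ φ ∈ Q, ¬ (α / 2 * (I.card : ℝ) ≤ ((I.filter fun i => φ i = true).card : ℝ))) :
    ∑ φ ∈ Q, ∏ i, cond (φ i) α (1 - α) ≤ μ / 2 := by
  classical
  set c : ℝ := Real.exp (α / 2) * ((1 - α) + α * Real.exp (-1)) with hc
  have hmaster := master (κ := fun _ : Fin k => Bool) (fun _ b => cond b α (1 - α))
      (fun i b => if i ∈ I then Real.exp (α / 2 + (if b = true then (-1 : ℝ) else 0)) else 1)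
      (fun _ b => cond_nonneg hα0 hα1 b)
      (fun i b => by split <;> positivity) Q ?_
  · have hrhs : (∏ i : Fin k, ∑ b : Bool,
        (if i ∈ I then Real.exp (α / 2 + (if b = true then (-1 : ℝ) else 0)) else 1)
          * cond b α (1 - α)) = c ^ I.card := by
      have heach : ∀ i : Fin k, (∑ b : Bool,
          (if i ∈ I then Real.exp (α / 2 + (if b = true then (-1 : ℝ) else 0)) else 1)
            * cond b α (1 - α)) = if i ∈ I then c else 1 := by
        intro i
        by_cases h : i ∈ I <;>
          · simp only [Fintype.sum_bool, h, if_true, if_false, hc, cond]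
            norm_num [Real.exp_add, Real.exp_neg]
            try ring
      rw [Finset.prod_congr rfl fun i _ => heach i, Fintype.prod_ite_mem,
        Finset.prod_const]
    rw [hrhs] at hmaster
    have hE1 : (0:ℝ) ≤ Real.exp (-1) := (Real.exp_pos _).le
    have hc0 : 0 ≤ c := by
      apply mul_nonneg (Real.exp_pos _).le
      nlinarith
    have hcle : c ≤ Real.exp (-(α / 8)) := by
      have hx : (1 - α) + α * Real.exp (-1) ≤ Real.exp (-(α * (1 - Real.exp (-1)))) := by
        have h := Real.add_one_le_exp (-(α * (1 - Real.exp (-1))))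
        have h2 : -(α * (1 - Real.exp (-1))) + 1 = (1 - α) + α * Real.exp (-1) := by ring
        linarith
      calc c ≤ Real.exp (α / 2) * Real.exp (-(α * (1 - Real.exp (-1)))) :=
            mul_le_mul_of_nonneg_left hx (Real.exp_pos _).le
        _ = Real.exp (α / 2 + -(α * (1 - Real.exp (-1)))) := (Real.exp_add _ _).symm
        _ ≤ Real.exp (-(α / 8)) := by
            apply Real.exp_le_exp.mpr
            nlinarith [exp_neg_one_lt]
    calc ∑ φ ∈ Q, ∏ i, cond (φ i) α (1 - α) ≤ c ^ I.card := hmaster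
      _ ≤ Real.exp (-(α / 8)) ^ I.card := pow_le_pow_left₀ hc0 hcle _
      _ = Real.exp ((I.card : ℝ) * (-(α / 8))) := (Real.exp_nat_mul _ _).symm
      _ ≤ Real.exp (-Real.log (2 / μ)) := by
          apply Real.exp_le_exp.mpr
          have h3 : (I.card : ℝ) * (-(α / 8)) = -(α * I.card / 8) := by ring
          rw [h3]
          linarith
      _ = μ / 2 := by
          rw [Real.exp_neg, Real.exp_log (by positivity), inv_div]
  · intro φ hφ
    rw [Fintype.prod_ite_mem, ← Real.exp_sum]
    apply Real.one_le_exp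
    have hsum : ∑ i ∈ I, (α / 2 + if φ i = true then (-1 : ℝ) else 0)
        = α / 2 * I.card - ((I.filter fun i => φ i = true).card : ℝ) := by
      rw [Finset.sum_add_distrib, Finset.sum_const, Finset.sum_ite, Finset.sum_const,
        Finset.sum_const_zero, nsmul_eq_mul, nsmul_eq_mul]
      ring
    rw [hsum]
    have := not_le.mp (hQ φ hφ)
    linarith

/-- Per-subcollection bound: the probability that the subcollection indexed by `I`
fails to be `(α/2, μ)`-uniform is at most `exp((μ/2)(√e − 2))^m`. -/
lemma badIBound {U : Type*} [Fintype U] [DecidableEq U] {k m : ℕ} (hU : Fintype.card U = m)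
    {α μ : ℝ} (hα0 : 0 < α) (hα1 : α < 1) (hμ0 : 0 < μ) (hμ1 : μ < 1)
    (I : Finset (Fin k)) (hIt : 8 * Real.log (2 / μ) ≤ α * I.card)
    (P : Finset (U → Fin k → Bool))
    (hP : ∀ ψ ∈ P, ¬ IsUniformOn (subsetOf (flip ψ)) I (α / 2) μ) :
    ∑ ψ ∈ P, ∏ u, ∏ i, cond (ψ u i) α (1 - α)
      ≤ Real.exp ((μ / 2) * (Real.exp 2⁻¹ - 2)) ^ m := by
  classical
  set good : (Fin k → Bool) → Prop :=
    fun φ => α / 2 * (I.card : ℝ) ≤ ((I.filter fun i => φ i = true).card : ℝ) with hgood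
  have hmaster := master (κ := fun _ : U => Fin k → Bool)
      (fun _ φ => ∏ i, cond (φ i) α (1 - α))
      (fun _ φ => Real.exp (-(μ / 2)) * (if good φ then 1 else Real.exp 2⁻¹))
      (fun _ φ => Finset.prod_nonneg fun i _ => cond_nonneg hα0 hα1 _)
      (fun _ φ => by split <;> positivity) P ?_
  · set q := ∑ φ ∈ univ.filter (fun φ : Fin k → Bool => ¬ good φ),
        ∏ i, cond (φ i) α (1 - α) with hqdef
    have hq0 : 0 ≤ q :=
      Finset.sum_nonneg fun φ _ => Finset.prod_nonneg fun i _ => cond_nonneg hα0 hα1 _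
    have hqle : q ≤ μ / 2 :=
      colBound hα0 hα1 hμ0 hμ1 I hIt _ (fun φ hφ => (Finset.mem_filter.mp hφ).2)
    have hsplit : ∑ φ : Fin k → Bool,
        (if good φ then (1:ℝ) else Real.exp 2⁻¹) * (∏ i, cond (φ i) α (1 - α))
        = (1 - q) + Real.exp 2⁻¹ * q := by
      rw [← Finset.sum_filter_add_sum_filter_not univ good]
      have h1 : ∑ φ ∈ univ.filter good,
          (if good φ then (1:ℝ) else Real.exp 2⁻¹) * (∏ i, cond (φ i) α (1 - α))
          = ∑ φ ∈ univ.filter good, ∏ i, cond (φ i) α (1 - α) :=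
        Finset.sum_congr rfl fun φ hφ => by
          rw [if_pos (Finset.mem_filter.mp hφ).2, one_mul]
      have h2 : ∑ φ ∈ univ.filter (fun φ => ¬ good φ),
          (if good φ then (1:ℝ) else Real.exp 2⁻¹) * (∏ i, cond (φ i) α (1 - α))
          = Real.exp 2⁻¹ * q := by
        rw [hqdef, Finset.mul_sum]
        exact Finset.sum_congr rfl fun φ hφ => by
          rw [if_neg (Finset.mem_filter.mp hφ).2]
      have h3 : ∑ φ ∈ univ.filter good, ∏ i, cond (φ i) α (1 - α) = 1 - q := by
        have htot := sum_col_eq_one (k := k) hα0 hα1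
        have hsp := Finset.sum_filter_add_sum_filter_not univ good
          (fun φ : Fin k → Bool => ∏ i, cond (φ i) α (1 - α))
        rw [htot] at hsp
        linarith [hsp]
      rw [h1, h2, h3]
    have hfac : ∀ u : U, (∑ φ : Fin k → Bool,
        (Real.exp (-(μ / 2)) * (if good φ then 1 else Real.exp 2⁻¹))
          * ∏ i, cond (φ i) α (1 - α))
        = Real.exp (-(μ / 2)) * ((1 - q) + Real.exp 2⁻¹ * q) := by
      intro u
      rw [← hsplit, Finset.mul_sum]
      exact Finset.sum_congr rfl fun φ _ => by ring
    rw [Finset.prod_congr rfl fun u _ => hfac u, Finset.prod_const, card_univ, hU] at hmaster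
    refine hmaster.trans (pow_le_pow_left₀ ?_ ?_ m)
    · have he1 : (1:ℝ) ≤ Real.exp 2⁻¹ := Real.one_le_exp (by norm_num)
      have heq : 0 ≤ Real.exp 2⁻¹ * q := mul_nonneg (Real.exp_pos _).le hq0
      have hbase : 0 ≤ (1 - q) + Real.exp 2⁻¹ * q := by linarith
      exact mul_nonneg (Real.exp_pos _).le hbase
    · have he1 : (1:ℝ) ≤ Real.exp 2⁻¹ := Real.one_le_exp (by norm_num)
      have hv3 : (1 - q) + Real.exp 2⁻¹ * q ≤ Real.exp ((μ / 2) * (Real.exp 2⁻¹ - 1)) := by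
        have h := Real.add_one_le_exp ((μ / 2) * (Real.exp 2⁻¹ - 1))
        nlinarith
      calc Real.exp (-(μ / 2)) * ((1 - q) + Real.exp 2⁻¹ * q)
          ≤ Real.exp (-(μ / 2)) * Real.exp ((μ / 2) * (Real.exp 2⁻¹ - 1)) :=
            mul_le_mul_of_nonneg_left hv3 (Real.exp_pos _).le
        _ = Real.exp ((μ / 2) * (Real.exp 2⁻¹ - 2)) := by
            rw [← Real.exp_add]; congr 1; ring
  · intro ψ hψ
    have hnu := hP ψ hψ
    set N := (univ.filter fun u : U => ¬ good (ψ u)).card with hN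
    set Ngood := (univ.filter fun u : U => good (ψ u)).card with hNg
    have hcard : Ngood + N = m := by
      rw [hNg, hN, Finset.card_filter_add_card_filter_not, card_univ, hU]
    have hprod : ∏ u : U, (Real.exp (-(μ / 2)) * (if good (ψ u) then 1 else Real.exp 2⁻¹))
        = Real.exp ((m : ℝ) * (-(μ / 2))) * Real.exp ((N : ℝ) * 2⁻¹) := by
      rw [Finset.prod_mul_distrib, Finset.prod_const, Finset.prod_ite,
        Finset.prod_const_one, Finset.prod_const, card_univ, hU, one_mul,
        ← Real.exp_nat_mul, ← Real.exp_nat_mul]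
    have hgoodset : {u : U | α / 2 * (I.card : ℝ) ≤
        (({i : Fin k | i ∈ I ∧ u ∈ subsetOf (flip ψ) i}).ncard : ℝ)}
        = ↑(univ.filter fun u => good (ψ u)) := by
      ext u
      have hset : {i : Fin k | i ∈ I ∧ u ∈ subsetOf (flip ψ) i}
          = ↑(I.filter fun i => ψ u i = true) := by
        ext i
        simp only [Set.mem_setOf_eq, subsetOf, Finset.coe_filter, Finset.mem_filter,
          Finset.mem_univ, true_and]
        exact Iff.rfl
      simp only [Set.mem_setOf_eq, hset, Set.ncard_coe_finset, Finset.mem_coe,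
        Finset.mem_filter, Finset.mem_univ, true_and]
      exact Iff.rfl
    have hng : ¬ ((1 - μ) * (m:ℝ) ≤ (Ngood : ℝ)) := by
      intro hcon
      apply hnu
      show (1 - μ) * (Fintype.card U : ℝ) ≤ _
      rw [hU, hgoodset, Set.ncard_coe_finset]
      exact hcon
    have h4 : (Ngood : ℝ) < (1 - μ) * m := not_le.mp hng
    have h5 : (Ngood : ℝ) + N = m := by exact_mod_cast hcard
    rw [hprod, ← Real.exp_add]
    apply Real.one_le_exp
    nlinarith [h4, h5]

lemma rpow_bound {μ : ℝ} (hμ0 : 0 < μ) (hμ1 : μ < 1) (m : ℕ) :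
    Real.exp ((μ / 2) * (Real.exp 2⁻¹ - 2)) ^ m ≤ (2:ℝ) ^ (-(μ ^ 2 * (m:ℝ) / 16)) := by
  have h1 : Real.exp 2⁻¹ * Real.exp 2⁻¹ = Real.exp 1 := by
    rw [← Real.exp_add]; norm_num
  have hexp : Real.exp 2⁻¹ ≤ 1.65 := by
    nlinarith [Real.exp_one_lt_d9, Real.exp_pos (2⁻¹ : ℝ)]
  have hlog : Real.log 2 ≤ 0.6931471808 := Real.log_two_lt_d9.le
  have hlogpos : 0 < Real.log 2 := Real.log_pos (by norm_num)
  rw [Real.rpow_def_of_pos (by norm_num : (0:ℝ) < 2), ← Real.exp_nat_mul]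
  apply Real.exp_le_exp.mpr
  have hm0 : (0:ℝ) ≤ (m:ℝ) := Nat.cast_nonneg m
  have key : (Real.exp 2⁻¹ - 2) / 2 + Real.log 2 * μ / 16 ≤ 0 := by nlinarith
  have hmm : 0 ≤ (m:ℝ) * μ := mul_nonneg hm0 hμ0.le
  have := mul_nonpos_of_nonneg_of_nonpos hmm key
  nlinarith [this]

end Stmt16Aux

open Stmt16Aux in
/-- For random subsets `S₁, …, S_k` of an `m`-element universe, each including each
element independently with probability `α`, with probability at least
`1 − 2^{(log₂ k)·⌈8·ln(2/μ)/α⌉ − μ²m/16}` every subcollection of size `⌈8·ln(2/μ)/α⌉` is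
`(α/2, μ)`-uniform. -/
theorem stmt16 {U : Type*} [Fintype U] [DecidableEq U] (m k : ℕ) (hU : Fintype.card U = m)
    (α μ : ℝ) (hα0 : 0 < α) (hα1 : α < 1) (hμ0 : 0 < μ) (hμ1 : μ < 1) :
    1 - (2 : ℝ) ^ (Real.logb 2 (k : ℝ) * (⌈8 * Real.log (2 / μ) / α⌉₊ : ℝ) -
        μ ^ 2 * (m : ℝ) / 16) ≤
      prSets (U := U) k α
        {ω | ∀ I : Finset (Fin k), I.card = ⌈8 * Real.log (2 / μ) / α⌉₊ →
          IsUniformOn (subsetOf ω) I (α / 2) μ} := by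
  classical
  set t := ⌈8 * Real.log (2 / μ) / α⌉₊ with htdef
  have hlogpos : 0 < Real.log (2 / μ) := Real.log_pos (by rw [lt_div_iff₀ hμ0]; linarith)
  have htpos : 0 < t := Nat.ceil_pos.mpr (by positivity)
  have ht0 : t ≠ 0 := htpos.ne'
  have hIt : ∀ I : Finset (Fin k), I.card = t → 8 * Real.log (2 / μ) ≤ α * I.card := by
    intro I hI
    rw [hI]
    have h := Nat.le_ceil (8 * Real.log (2 / μ) / α)
    rw [div_le_iff₀ hα0] at h
    rw [← htdef] at h
    nlinarith [h]
  set p : (Fin k → U → Bool) → Prop :=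
    fun ω => ∀ I : Finset (Fin k), I.card = t → IsUniformOn (subsetOf ω) I (α / 2) μ with hp
  have hpr : prSets (U := U) k α {ω | p ω}
      = ∑ ω ∈ univ.filter p, ∏ i, ∏ u, cond (ω i u) α (1 - α) := by
    unfold prSets
    rw [Finset.sum_filter]
    refine Finset.sum_congr rfl fun ω _ => ?_
    by_cases h : p ω
    · rw [Set.indicator_of_mem (show ω ∈ {ω | p ω} from h), if_pos h]
    · rw [Set.indicator_of_notMem (show ω ∉ {ω | p ω} from h), if_neg h]
  have hW0 : ∀ ω : Fin k → U → Bool, 0 ≤ ∏ i, ∏ u, cond (ω i u) α (1 - α) := fun ω =>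
    Finset.prod_nonneg fun i _ => Finset.prod_nonneg fun u _ => cond_nonneg hα0 hα1 _
  have htot : ∑ ω : Fin k → U → Bool, ∏ i, ∏ u, cond (ω i u) α (1 - α) = 1 :=
    sum_prod_eq_one (κ := fun _ : Fin k => U → Bool)
      (fun _ ψ => ∏ u, cond (ψ u) α (1 - α))
      (fun _ => sum_prod_eq_one (κ := fun _ : U => Bool) (fun _ b => cond b α (1 - α))
        (fun _ => sum_bool_cond α))
  have hsplitW := Finset.sum_filter_add_sum_filter_not univ p
    (fun ω : Fin k → U → Bool => ∏ i, ∏ u, cond (ω i u) α (1 - α))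
  rw [htot] at hsplitW
  -- union bound over all subcollections of size t
  have hbig : ∑ ω ∈ univ.filter (fun ω => ¬ p ω), ∏ i, ∏ u, cond (ω i u) α (1 - α)
      ≤ (k.choose t : ℝ) * Real.exp ((μ / 2) * (Real.exp 2⁻¹ - 2)) ^ m := by
    have hsub : univ.filter (fun ω => ¬ p ω) ⊆
        (powersetCard t (univ : Finset (Fin k))).biUnion
          (fun I => univ.filter (fun ω => ¬ IsUniformOn (subsetOf ω) I (α / 2) μ)) := by
      intro ω hω
      have hω2 := (Finset.mem_filter.mp hω).2
      have hex : ∃ I : Finset (Fin k), I.card = t ∧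
          ¬ IsUniformOn (subsetOf ω) I (α / 2) μ := by
        by_contra hcon
        push_neg at hcon
        exact hω2 (fun I hI => hcon I hI)
      obtain ⟨I, hI, hbad⟩ := hex
      exact Finset.mem_biUnion.mpr ⟨I, Finset.mem_powersetCard_univ.mpr hI,
        Finset.mem_filter.mpr ⟨Finset.mem_univ _, hbad⟩⟩
    calc ∑ ω ∈ univ.filter (fun ω => ¬ p ω), ∏ i, ∏ u, cond (ω i u) α (1 - α)
        ≤ ∑ ω ∈ (powersetCard t (univ : Finset (Fin k))).biUnion
            (fun I => univ.filter (fun ω => ¬ IsUniformOn (subsetOf ω) I (α / 2) μ)),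
            ∏ i, ∏ u, cond (ω i u) α (1 - α) :=
          Finset.sum_le_sum_of_subset_of_nonneg hsub (fun ω _ _ => hW0 ω)
      _ ≤ ∑ I ∈ powersetCard t (univ : Finset (Fin k)),
            ∑ ω ∈ univ.filter (fun ω => ¬ IsUniformOn (subsetOf ω) I (α / 2) μ),
            ∏ i, ∏ u, cond (ω i u) α (1 - α) :=
          sum_biUnion_le _ _ _ hW0
      _ ≤ ∑ _I ∈ powersetCard t (univ : Finset (Fin k)),
            Real.exp ((μ / 2) * (Real.exp 2⁻¹ - 2)) ^ m := by
          apply Finset.sum_le_sum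
          intro I hI
          have hIcard : I.card = t := Finset.mem_powersetCard_univ.mp hI
          have hflip : ∑ ω ∈ univ.filter
                (fun ω : Fin k → U → Bool => ¬ IsUniformOn (subsetOf ω) I (α / 2) μ),
              ∏ i : Fin k, ∏ u : U, cond (ω i u) α (1 - α)
              = ∑ ψ ∈ univ.filter
                  (fun ψ : U → Fin k → Bool => ¬ IsUniformOn (subsetOf (flip ψ)) I (α / 2) μ),
                ∏ u, ∏ i, cond (ψ u i) α (1 - α) := by
            refine Finset.sum_nbij' (fun ω => flip ω) (fun ψ => flip ψ) ?_ ?_ ?_ ?_ ?_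
            · intro ω hω
              simp only [Finset.mem_filter, Finset.mem_univ, true_and] at hω ⊢
              exact hω
            · intro ψ hψ
              simp only [Finset.mem_filter, Finset.mem_univ, true_and] at hψ ⊢
              exact hψ
            · intro ω _; rfl
            · intro ψ _; rfl
            · intro ω _
              show _ = ∏ u : U, ∏ i : Fin k, cond (ω i u) α (1 - α)
              exact Finset.prod_comm
          rw [hflip]
          exact badIBound hU hα0 hα1 hμ0 hμ1 I (hIt I hIcard) _
            (fun ψ hψ => (Finset.mem_filter.mp hψ).2)
      _ = (k.choose t : ℝ) * Real.exp ((μ / 2) * (Real.exp 2⁻¹ - 2)) ^ m := by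
          rw [Finset.sum_const, Finset.card_powersetCard, Finset.card_univ,
            Fintype.card_fin, nsmul_eq_mul]
  have hfinal : (k.choose t : ℝ) * Real.exp ((μ / 2) * (Real.exp 2⁻¹ - 2)) ^ m
      ≤ (2:ℝ) ^ (Real.logb 2 (k:ℝ) * (t:ℝ) - μ ^ 2 * (m:ℝ) / 16) := by
    have h1 : (k.choose t : ℝ) ≤ (k:ℝ) ^ t := by
      exact_mod_cast Nat.choose_le_pow k t
    have h2 : (k:ℝ) ^ t ≤ (2:ℝ) ^ (Real.logb 2 (k:ℝ) * (t:ℝ)) := by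
      rcases Nat.eq_zero_or_pos k with hk | hk
      · rw [hk]
        push_cast
        rw [zero_pow ht0]
        exact (Real.rpow_pos_of_pos (by norm_num) _).le
      · have hk0 : (0:ℝ) < k := by exact_mod_cast hk
        refine le_of_eq ?_
        calc (k:ℝ) ^ t = ((2:ℝ) ^ Real.logb 2 (k:ℝ)) ^ t := by
              rw [Real.rpow_logb (by norm_num) (by norm_num) hk0]
          _ = (2:ℝ) ^ (Real.logb 2 (k:ℝ) * (t:ℝ)) := by
              rw [← Real.rpow_natCast ((2:ℝ) ^ Real.logb 2 (k:ℝ)) t,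
                ← Real.rpow_mul (by norm_num)]
    have h3 := rpow_bound hμ0 hμ1 m
    calc (k.choose t : ℝ) * Real.exp ((μ / 2) * (Real.exp 2⁻¹ - 2)) ^ m
        ≤ (2:ℝ) ^ (Real.logb 2 (k:ℝ) * (t:ℝ)) * (2:ℝ) ^ (-(μ ^ 2 * (m:ℝ) / 16)) :=
          mul_le_mul (h1.trans h2) h3 (pow_nonneg (Real.exp_pos _).le m)
            (Real.rpow_nonneg (by norm_num) _)
      _ = (2:ℝ) ^ (Real.logb 2 (k:ℝ) * (t:ℝ) - μ ^ 2 * (m:ℝ) / 16) := by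
          rw [← Real.rpow_add (by norm_num : (0:ℝ) < 2)]
          congr 1
          try ring
  rw [hpr]
  linarith [hbig.trans hfinal]
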